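/- Let Q = GG* with G : W → Z bounded and injective adjoint G*. Setting u_α = G*(αI+Q)^{-1}z for α ∈ (0,1], one has the identity G u_α = z - α(αI+Q)^{-1}z; consequently lim_{α→0⁺} G u_α = z for every z ∈ Z. -/

import Mathlib

open Filter Topology

/-- With Q = GG*, G* injective, and u_α = G*(αI+Q)⁻¹z for α ∈ (0,1], one has
G u_α = z - α(αI+Q)⁻¹z, and consequently G u_α → z as α → 0⁺. -/
theorem stmt_10 {W Z : Type*} [NormedAddCommGroup W] [InnerProductSpace ℝ W] [CompleteSpace W]
    [NormedAddCommGroup Z] [InnerProductSpace ℝ Z] [CompleteSpace Z]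
    (G : W →L[ℝ] Z) (hG : Function.Injective (ContinuousLinearMap.adjoint G))
    (Q : Z →L[ℝ] Z) (hQ : Q = G.comp (ContinuousLinearMap.adjoint G))
    (R : ℝ → Z →L[ℝ] Z)
    (hR : ∀ α : ℝ, 0 < α →
      (α • ContinuousLinearMap.id ℝ Z + Q).comp (R α) = ContinuousLinearMap.id ℝ Z ∧
      (R α).comp (α • ContinuousLinearMap.id ℝ Z + Q) = ContinuousLinearMap.id ℝ Z)
    (u : ℝ → Z → W)
    (hu : ∀ α ∈ Set.Ioc (0:ℝ) 1, ∀ z : Z, u α z = ContinuousLinearMap.adjoint G (R α z)) :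
    (∀ α ∈ Set.Ioc (0:ℝ) 1, ∀ z : Z, G (u α z) = z - α • R α z) ∧
    (∀ z : Z, Tendsto (fun α : ℝ => G (u α z)) (𝓝[>] 0) (𝓝 z)) := by
  -- Q is nonnegative: ⟪Q x, x⟫ = ‖G* x‖²
  have hQnn : ∀ x : Z, (inner ℝ (Q x) x : ℝ) = ‖ContinuousLinearMap.adjoint G x‖ ^ 2 := by
    intro x
    rw [hQ]
    simp only [ContinuousLinearMap.comp_apply]
    rw [real_inner_comm, ← ContinuousLinearMap.adjoint_inner_left]
    exact real_inner_self_eq_norm_sq _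
  -- key identities from hR
  have hAR : ∀ α : ℝ, 0 < α → ∀ x : Z, α • R α x + Q (R α x) = x := by
    intro α hα x
    have := congrArg (fun T => T x) (hR α hα).1
    simpa [ContinuousLinearMap.comp_apply, ContinuousLinearMap.add_apply] using this
  have hRA : ∀ α : ℝ, 0 < α → ∀ x : Z, R α (α • x + Q x) = x := by
    intro α hα x
    have := congrArg (fun T => T x) (hR α hα).2
    simpa [ContinuousLinearMap.comp_apply, ContinuousLinearMap.add_apply] using this
  -- norm bound: α ‖R α x‖ ≤ ‖x‖
  have hbound : ∀ α : ℝ, 0 < α → ∀ x : Z, α * ‖R α x‖ ≤ ‖x‖ := by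
    intro α hα x
    set y := R α x with hy
    have h1 : α * ‖y‖ ^ 2 ≤ (inner ℝ x y : ℝ) := by
      have : (inner ℝ x y : ℝ) = α * ‖y‖ ^ 2 + (inner ℝ (Q y) y : ℝ) := by
        rw [← hAR α hα x, hy]
        rw [inner_add_left, real_inner_smul_left, real_inner_self_eq_norm_sq]
      rw [this]
      have := hQnn y
      nlinarith [sq_nonneg ‖ContinuousLinearMap.adjoint G y‖]
    have h2 : (inner ℝ x y : ℝ) ≤ ‖x‖ * ‖y‖ := real_inner_le_norm x y
    rcases eq_or_ne y 0 with h | h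
    · simp [h]
    · have hy0 : 0 < ‖y‖ := norm_pos_iff.mpr h
      have : α * ‖y‖ * ‖y‖ ≤ ‖x‖ * ‖y‖ := by nlinarith
      exact le_of_mul_le_mul_right this hy0
  -- first identity: G (u α z) = z - α • R α z
  have hmain : ∀ α ∈ Set.Ioc (0:ℝ) 1, ∀ z : Z, G (u α z) = z - α • R α z := by
    intro α hα z
    rw [hu α hα z]
    have hq : G (ContinuousLinearMap.adjoint G (R α z)) = Q (R α z) := by
      rw [hQ]; rfl
    rw [hq]
    exact eq_sub_of_add_eq' (hAR α hα.1 z)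
  refine ⟨hmain, fun z => ?_⟩
  -- range of Q is dense
  have hdense : Dense (Set.range fun w => Q w) := by
    have : (LinearMap.range (Q : Z →ₗ[ℝ] Z)).topologicalClosure = ⊤ := by
      rw [Submodule.topologicalClosure_eq_top_iff]
      rw [Submodule.eq_bot_iff]
      intro y hy
      have h0 : (inner ℝ (Q y) y : ℝ) = 0 :=
        (Submodule.mem_orthogonal _ _).mp hy (Q y) (LinearMap.mem_range_self _ y)
      have : ContinuousLinearMap.adjoint G y = 0 := by
        have := hQnn y
        rw [h0] at this
        have := (pow_eq_zero_iff (n := 2) (by norm_num)).mp this.symm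
        exact norm_eq_zero.mp this
      exact hG (by simpa using this)
    have := Submodule.dense_iff_topologicalClosure_eq_top.mpr this
    simpa [Set.range, LinearMap.coe_range] using this
  -- α • R α z → 0
  have hkey : Tendsto (fun α : ℝ => α • R α z) (𝓝[>] 0) (𝓝 0) := by
    rw [NormedAddCommGroup.tendsto_nhds_zero]
    intro ε hε
    obtain ⟨p, hpball, w, hw⟩ := Metric.dense_iff.mp hdense z (ε/2) (by positivity)
    have hzw : ‖z - Q w‖ < ε / 2 := by
      have h := Metric.mem_ball.mp hpball
      rw [dist_comm, dist_eq_norm] at h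
      simp only [] at hw
      rw [hw]
      exact h
    set δ : ℝ := ε / (4 * (‖w‖ + 1)) with hδdef
    have hw1 : 0 < ‖w‖ + 1 := by positivity
    have hδpos : 0 < δ := by positivity
    have hmem : Set.Ioo (0:ℝ) δ ∈ 𝓝[>] (0:ℝ) := Ioo_mem_nhdsGT_of_mem ⟨le_refl _, hδpos⟩
    filter_upwards [hmem] with α hα
    have hα0 : 0 < α := hα.1
    -- R α (Q w) = w - α • R α w
    have hRQ : R α (Q w) = w - α • R α w := by
      have h1 := hRA α hα0 w
      have : R α (Q w) = R α (α • w + Q w) - α • R α w := by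
        rw [map_add, map_smul]; abel
      rw [this, h1]
    have hdecomp : α • R α z = α • R α (z - Q w) + α • (w - α • R α w) := by
      rw [← hRQ, ← smul_add, ← map_add]
      congr 2
      abel
    have hb1 : ‖α • R α (z - Q w)‖ ≤ ‖z - Q w‖ := by
      rw [norm_smul, Real.norm_eq_abs, abs_of_pos hα0]
      exact hbound α hα0 _
    have hb2 : ‖α • (w - α • R α w)‖ ≤ 2 * α * ‖w‖ := by
      rw [norm_smul, Real.norm_eq_abs, abs_of_pos hα0]
      have h3 : ‖w - α • R α w‖ ≤ ‖w‖ + α * ‖R α w‖ := by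
        calc ‖w - α • R α w‖ ≤ ‖w‖ + ‖α • R α w‖ := norm_sub_le _ _
          _ = ‖w‖ + α * ‖R α w‖ := by
            rw [norm_smul, Real.norm_eq_abs, abs_of_pos hα0]
      have h4 : α * ‖R α w‖ ≤ ‖w‖ := hbound α hα0 w
      nlinarith [norm_nonneg (R α w)]
    have hsmall : 2 * α * ‖w‖ < ε / 2 := by
      have hαδ : α < δ := hα.2
      rw [hδdef] at hαδ
      have : α * (4 * (‖w‖ + 1)) < ε := by
        rw [← lt_div_iff₀ (by positivity)] at *
        linarith [hαδ]
      nlinarith [norm_nonneg w, hα0]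
    calc ‖α • R α z‖ ≤ ‖α • R α (z - Q w)‖ + ‖α • (w - α • R α w)‖ := by
          rw [hdecomp]; exact norm_add_le _ _
      _ < ε / 2 + ε / 2 := by
          apply add_lt_add_of_le_of_lt (le_trans hb1 (le_of_lt hzw)) (lt_of_le_of_lt hb2 hsmall)
      _ = ε := by ring
  -- conclude
  have heq : (fun α : ℝ => G (u α z)) =ᶠ[𝓝[>] (0:ℝ)] fun α => z - α • R α z := by
    have hmem : Set.Ioc (0:ℝ) 1 ∈ 𝓝[>] (0:ℝ) := Ioc_mem_nhdsGT_of_mem ⟨le_refl _, one_pos⟩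
    filter_upwards [hmem] with α hα
    exact hmain α hα z
  rw [Filter.tendsto_congr' heq]
  have : Tendsto (fun α : ℝ => z - α • R α z) (𝓝[>] (0:ℝ)) (𝓝 (z - 0)) :=
    tendsto_const_nhds.sub hkey
  simpa using this
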